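/- Let S = {x ∈ ℕⁿ : f(x) mod b ≤ g(x)} be the proportionally modular affine semigroup defined by f₁x₁+⋯+fₙxₙ mod b ≤ g₁x₁+⋯+gₙxₙ with b > 0. If g_i > 0 for all i ∈ [n], then ℕⁿ ∖ S is a finite set; that is, S is an ℕⁿ-semigroup. -/
import Mathlib


/-- Let `S = {x ∈ ℕⁿ : f(x) mod b ≤ g(x)}` with `b > 0`. If `gᵢ > 0` for all `i`, then
`ℕⁿ ∖ S` is finite; that is, `S` is an `ℕⁿ`-semigroup (a submonoid of `ℕⁿ` with finite
complement). -/
theorem stmt14 (n : ℕ) (f g : Fin n → ℤ) (b : ℤ) (hb : 0 < b) (hg : ∀ i, 0 < g i) :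
    ((0 : Fin n → ℕ) ∈ {x : Fin n → ℕ |
        (∑ i, f i * (x i : ℤ)) % b ≤ ∑ i, g i * (x i : ℤ)}) ∧
    (∀ x ∈ {x : Fin n → ℕ | (∑ i, f i * (x i : ℤ)) % b ≤ ∑ i, g i * (x i : ℤ)},
      ∀ y ∈ {x : Fin n → ℕ | (∑ i, f i * (x i : ℤ)) % b ≤ ∑ i, g i * (x i : ℤ)},
        x + y ∈ {x : Fin n → ℕ | (∑ i, f i * (x i : ℤ)) % b ≤ ∑ i, g i * (x i : ℤ)}) ∧
    ({x : Fin n → ℕ | (∑ i, f i * (x i : ℤ)) % b ≤ ∑ i, g i * (x i : ℤ)}ᶜ).Finite := by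
  have hbne : b ≠ 0 := hb.ne'
  refine ⟨?_, ?_, ?_⟩
  · simp
  · intro x hx y hy
    simp only [Set.mem_setOf_eq] at *
    have hsum : (∑ i, f i * (((x + y) i : ℕ) : ℤ)) =
        (∑ i, f i * (x i : ℤ)) + ∑ i, f i * (y i : ℤ) := by
      rw [← Finset.sum_add_distrib]
      refine Finset.sum_congr rfl fun i _ => ?_
      simp [Pi.add_apply]
      ring
    have hgsum : (∑ i, g i * (((x + y) i : ℕ) : ℤ)) =
        (∑ i, g i * (x i : ℤ)) + ∑ i, g i * (y i : ℤ) := by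
      rw [← Finset.sum_add_distrib]
      refine Finset.sum_congr rfl fun i _ => ?_
      simp [Pi.add_apply]
      ring
    rw [hsum, hgsum]
    calc ((∑ i, f i * (x i : ℤ)) + ∑ i, f i * (y i : ℤ)) % b
        = ((∑ i, f i * (x i : ℤ)) % b + (∑ i, f i * (y i : ℤ)) % b) % b := by
          rw [Int.add_emod]
      _ ≤ (∑ i, f i * (x i : ℤ)) % b + (∑ i, f i * (y i : ℤ)) % b := by
          have key : ∀ z : ℤ, 0 ≤ z → z % b ≤ z := by
            intro z hz
            rcases lt_or_ge z b with h | h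
            · rw [Int.emod_eq_of_lt hz h]
            · exact (Int.emod_lt_of_pos z hb).le.trans h
          exact key _ (add_nonneg (Int.emod_nonneg _ hbne) (Int.emod_nonneg _ hbne))
      _ ≤ _ := add_le_add hx hy
  · apply Set.Finite.subset (Set.Finite.pi (fun i : Fin n => Set.finite_Iio b.toNat))
    intro x hx
    simp only [Set.mem_compl_iff, Set.mem_setOf_eq, not_le] at hx
    have hlt : (∑ i, g i * (x i : ℤ)) < b :=
      lt_of_lt_of_le hx (Int.emod_lt_of_pos _ hb).le
    intro i _
    simp only [Set.mem_Iio]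
    have h1 : (x i : ℤ) ≤ ∑ j, g j * (x j : ℤ) := by
      calc (x i : ℤ) ≤ g i * (x i : ℤ) := by
            nlinarith [hg i, Int.ofNat_nonneg (x i)]
        _ ≤ ∑ j, g j * (x j : ℤ) :=
            Finset.single_le_sum (f := fun j => g j * (x j : ℤ))
              (fun j _ => mul_nonneg (hg j).le (Int.ofNat_nonneg _)) (Finset.mem_univ i)
    have : (x i : ℤ) < b := lt_of_le_of_lt h1 hlt
    omega
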